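/- Let 0 < λN < λN1 be real numbers, let ε > 0 satisfy ε·(3·λN1 + λN) ≤ 1, set θ_ε := (1 − √(1 − 2ε(λN + λN1)))/(2ε), and let λ ∈ ℝ satisfy λ ≥ λN1. If y : ℝ → ℝ is twice differentiable and satisfies ε·y″(t) + y′(t) + λ·y(t) = 0 for all t ≤ 0 and ∫_{−∞}^0 e^{2θ_ε t}·y(t)² dt < ∞, then y(t) = 0 for all t ≤ 0. -/

import Mathlib

open MeasureTheory

lemma aux_const (g : ℝ → ℝ) (hg : ∀ t ≤ (0:ℝ), HasDerivAt g 0 t) :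
    ∀ t ≤ (0:ℝ), g t = g 0 := by
  intro s hs
  have hcont : ContinuousOn g (Set.Icc s 0) := fun x hx =>
    ((hg x hx.2).continuousAt).continuousWithinAt
  have hder : ∀ x ∈ Set.Ico s (0:ℝ), HasDerivWithinAt g 0 (Set.Ici x) x := fun x hx =>
    (hg x hx.2.le).hasDerivWithinAt
  exact (constant_of_has_deriv_right_zero hcont hder 0 ⟨hs, le_refl 0⟩).symm

lemma aux_int_le (g : ℝ → ℝ) (hg0 : ∀ t ∈ Set.Iic (0:ℝ), 0 ≤ g t)
    (hint : IntegrableOn g (Set.Iic 0)) {a b : ℝ} (hab : a ≤ b) (hb : b ≤ 0) :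
    ∫ s in a..b, g s ≤ ∫ s in Set.Iic (0:ℝ), g s := by
  rw [intervalIntegral.integral_of_le hab]
  apply setIntegral_mono_set hint
  · filter_upwards [ae_restrict_mem measurableSet_Iic] with x hx using hg0 x hx
  · apply Filter.Eventually.of_forall
    intro x hx
    exact le_trans hx.2 hb

lemma aux_contra (g : ℝ → ℝ) (hg0 : ∀ t ∈ Set.Iic (0:ℝ), 0 ≤ g t)
    (hint : IntegrableOn g (Set.Iic 0)) (C δ L T : ℝ) (hC : 0 < C) (hδ : δ < 0)
    (hL : 0 < L) (hT : T ≤ 0)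
    (hlow : ∀ t : ℝ, t + L ≤ T → C * Real.exp (δ * (t + L)) ≤ ∫ s in t..(t+L), g s) :
    False := by
  set M := ∫ s in Set.Iic (0:ℝ), g s with hM
  -- find u ≤ T with M < C * exp (δ * u)
  have hev : ∀ᶠ u in Filter.atBot, M < C * Real.exp (δ * u) ∧ u ≤ T := by
    apply Filter.Eventually.and
    · have h1 : Filter.Tendsto (fun u : ℝ => δ * u) Filter.atBot Filter.atTop :=
        Filter.tendsto_atBot_atTop_of_antitone
          (fun x y hxy => by nlinarith) (fun b => ⟨b/δ, by rw [mul_div_cancel₀]; exact hδ.ne⟩)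
      have h2 := (Real.tendsto_exp_atTop.comp h1).const_mul_atTop hC
      exact h2.eventually (Filter.eventually_gt_atTop M)
    · exact Filter.eventually_le_atBot T
  obtain ⟨u, h1, h2⟩ := hev.exists
  have h3 := hlow (u - L) (by linarith)
  rw [sub_add_cancel] at h3
  have h4 := aux_int_le g hg0 hint (a := u - L) (b := u) (by linarith) (by linarith)
  linarith

lemma aux_lower (g : ℝ → ℝ) (hg0 : ∀ t ∈ Set.Iic (0:ℝ), 0 ≤ g t)
    (hint : IntegrableOn g (Set.Iic 0)) (hgc : Continuous g)
    (C δ T : ℝ) (hC : 0 < C) (hδ : δ < 0) (hT : T ≤ 0)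
    (hbound : ∀ s ≤ T, C * Real.exp (δ * s) ≤ g s) : False := by
  apply aux_contra g hg0 hint C δ 1 T hC hδ one_pos hT
  intro t ht
  have hle : t ≤ t + 1 := by linarith
  have h1 : ∫ s in t..(t+1), C * Real.exp (δ * (t+1)) ≤ ∫ s in t..(t+1), g s := by
    apply intervalIntegral.integral_mono_on hle (by simp) (hgc.intervalIntegrable t (t+1))
    intro x hx
    calc C * Real.exp (δ * (t+1)) ≤ C * Real.exp (δ * x) := by
          have : δ * (t+1) ≤ δ * x := by nlinarith [hx.2]
          exact mul_le_mul_of_nonneg_left (Real.exp_le_exp.mpr this) hC.le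
      _ ≤ g x := hbound x (le_trans hx.2 ht)
  simpa using h1

lemma aux_trig_deriv (a b ω : ℝ) (hω : ω ≠ 0) (s : ℝ) :
    HasDerivAt (fun s => (a^2+b^2)/2*s + (a^2-b^2)/(4*ω)*Real.sin (2*ω*s)
      - a*b/(2*ω)*Real.cos (2*ω*s))
      ((a*Real.cos (ω*s)+b*Real.sin (ω*s))^2) s := by
  have h1 : HasDerivAt (fun s : ℝ => 2*ω*s) (2*ω) s := by
    simpa using (hasDerivAt_id s).const_mul (2*ω)
  have h2 := ((((hasDerivAt_id s).const_mul ((a^2+b^2)/2)).add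
      (h1.sin.const_mul ((a^2-b^2)/(4*ω)))).sub (h1.cos.const_mul ((a*b)/(2*ω))))
  convert h2 using 1
  rfl
  rfl
  rfl
  have hc2 : Real.cos (2*ω*s) = Real.cos (ω*s)^2 - Real.sin (ω*s)^2 := by
    rw [show 2*ω*s = ω*s + ω*s by ring, Real.cos_add]; ring
  have hs2 : Real.sin (2*ω*s) = 2 * Real.sin (ω*s) * Real.cos (ω*s) := by
    rw [show 2*ω*s = ω*s + ω*s by ring, Real.sin_add]; ring
  have hpyth := Real.sin_sq_add_cos_sq (ω*s)
  have hred : (a^2-b^2)/(4*ω)*(Real.cos (2*ω*s)*(2*ω)) = (a^2-b^2) * Real.cos (2*ω*s)/2 := by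
    field_simp; ring
  have hred2 : a*b/(2*ω)*(-Real.sin (2*ω*s)*(2*ω)) = -(a*b*Real.sin (2*ω*s)) := by
    field_simp
  rw [hred, hred2, hc2, hs2]
  linear_combination ((a^2+b^2)/2) * hpyth

lemma aux_trig_int (a b ω : ℝ) (hω : 0 < ω) (t : ℝ) :
    ∫ s in t..(t+2*Real.pi/ω), (a*Real.cos (ω*s)+b*Real.sin (ω*s))^2
      = (a^2+b^2)*(Real.pi/ω) := by
  have hcont : Continuous fun s => (a*Real.cos (ω*s)+b*Real.sin (ω*s))^2 := by
    fun_prop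
  rw [intervalIntegral.integral_eq_sub_of_hasDerivAt
    (fun s _ => aux_trig_deriv a b ω hω.ne' s) (hcont.intervalIntegrable _ _)]
  have h1 : 2*ω*(t+2*Real.pi/ω) = 2*ω*t + 2*Real.pi + 2*Real.pi := by
    field_simp; ring
  rw [h1, Real.sin_add_two_pi, Real.sin_add_two_pi, Real.cos_add_two_pi, Real.cos_add_two_pi]
  field_simp
  ring

lemma aux_osc (g : ℝ → ℝ) (hint : IntegrableOn g (Set.Iic 0)) (hgc : Continuous g)
    (a b ω δ : ℝ) (hω : 0 < ω) (hδ : δ < 0) (hab : 0 < a^2+b^2)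
    (hform : ∀ s ≤ (0:ℝ), g s = Real.exp (δ*s) * (a*Real.cos (ω*s)+b*Real.sin (ω*s))^2) :
    False := by
  have hg0 : ∀ t ∈ Set.Iic (0:ℝ), 0 ≤ g t := by
    intro t ht; rw [hform t ht]; positivity
  set L := 2*Real.pi/ω with hL
  have hLpos : 0 < L := by positivity
  apply aux_contra g hg0 hint ((a^2+b^2)*(Real.pi/ω)) δ L 0 (by positivity) hδ hLpos le_rfl
  intro t ht
  have hle : t ≤ t + L := by linarith
  have key : ∫ s in t..(t+L), Real.exp (δ*(t+L)) * (a*Real.cos (ω*s)+b*Real.sin (ω*s))^2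
      ≤ ∫ s in t..(t+L), g s := by
    apply intervalIntegral.integral_mono_on hle
      (by apply Continuous.intervalIntegrable; fun_prop) (hgc.intervalIntegrable _ _)
    intro x hx
    rw [hform x (le_trans hx.2 ht)]
    have : δ * (t+L) ≤ δ * x := by nlinarith [hx.2]
    exact mul_le_mul_of_nonneg_right (Real.exp_le_exp.mpr this) (by positivity)
  rw [intervalIntegral.integral_const_mul, aux_trig_int a b ω hω t] at key
  calc (a^2+b^2)*(Real.pi/ω) * Real.exp (δ * (t + L))
      = Real.exp (δ*(t+L)) * ((a^2+b^2)*(Real.pi/ω)) := by ring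
    _ ≤ ∫ s in t..(t+L), g s := key

lemma aux_sq_abs_mul (a e : ℝ) : (a*e)^2 = (|a| * e)^2 := by
  rw [mul_pow, mul_pow, sq_abs]

set_option maxHeartbeats 1000000 in
theorem stmt_13 (lamN lamN1 eps : ℝ) (hlamN : 0 < lamN) (hlt : lamN < lamN1)
    (heps : 0 < eps) (hgap : eps * (3 * lamN1 + lamN) ≤ 1)
    (theta : ℝ) (htheta : theta = (1 - Real.sqrt (1 - 2 * eps * (lamN + lamN1))) / (2 * eps))
    (lam : ℝ) (hlam : lam ≥ lamN1)
    (y : ℝ → ℝ) (hy : Differentiable ℝ y) (hy' : Differentiable ℝ (deriv y))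
    (hode : ∀ t : ℝ, t ≤ 0 → eps * deriv (deriv y) t + deriv y t + lam * y t = 0)
    (hint : IntegrableOn (fun t => Real.exp (2 * theta * t) * (y t) ^ 2) (Set.Iic 0)) :
    ∀ t : ℝ, t ≤ 0 → y t = 0 := by
  have heps2 : (2*eps) ≠ 0 := by positivity
  set D : ℝ := 1 - 2 * eps * (lamN + lamN1) with hDdef
  have hD : 0 < D := by nlinarith
  have hsD : 0 < Real.sqrt D := Real.sqrt_pos.mpr hD
  set α : ℝ := theta - 1/(2*eps) with hαdef
  have hαval : α = -(Real.sqrt D/(2*eps)) := by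
    rw [hαdef, htheta]; field_simp; ring
  have hα : α < 0 := by
    rw [hαval]
    have := div_pos hsD (by positivity : (0:ℝ) < 2*eps)
    linarith
  set w : ℝ → ℝ := fun t => Real.exp (t/(2*eps)) * y t with hwdef
  set w1 : ℝ → ℝ := fun t => Real.exp (t/(2*eps)) * (y t/(2*eps) + deriv y t) with hw1def
  set c : ℝ := (1 - 4*eps*lam)/(4*eps^2) with hcdef
  have hwc : Continuous w := by
    have := hy.continuous; fun_prop
  have hw1c : Continuous w1 := by
    have h1 := hy.continuous; have h2 := hy'.continuous; fun_prop
  have hwd : ∀ t : ℝ, HasDerivAt w (w1 t) t := by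
    intro t
    have he : HasDerivAt (fun t : ℝ => Real.exp (t/(2*eps)))
        (Real.exp (t/(2*eps)) * (1/(2*eps))) t := by
      have := ((hasDerivAt_id t).div_const (2*eps)).exp
      simpa using this
    have := he.mul (hy t).hasDerivAt
    convert this using 1
    rfl
    rfl
    rfl
    simp only [hw1def]; ring
  have hw1d : ∀ t : ℝ, t ≤ 0 → HasDerivAt w1 (c * w t) t := by
    intro t ht
    have he : HasDerivAt (fun t : ℝ => Real.exp (t/(2*eps)))
        (Real.exp (t/(2*eps)) * (1/(2*eps))) t := by
      have := ((hasDerivAt_id t).div_const (2*eps)).exp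
      simpa using this
    have hin : HasDerivAt (fun t => y t/(2*eps) + deriv y t)
        (deriv y t/(2*eps) + deriv (deriv y) t) t :=
      ((hy t).hasDerivAt.div_const (2*eps)).add (hy' t).hasDerivAt
    have := he.mul hin
    convert this using 1
    rfl
    rfl
    rfl
    have hyy : deriv (deriv y) t = (-(deriv y t) - lam * y t)/eps := by
      have h := hode t ht
      field_simp
      linarith
    simp only [hcdef, hwdef]
    rw [hyy]
    field_simp
    ring
  set g : ℝ → ℝ := fun t => Real.exp (2*α*t) * (w t)^2 with hgdef
  have hg0 : ∀ t ∈ Set.Iic (0:ℝ), 0 ≤ g t := by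
    intro t _; simp only [hgdef]; positivity
  have hgc : Continuous g := by fun_prop
  have hgint : IntegrableOn g (Set.Iic 0) := by
    have hfe : (fun t => Real.exp (2 * theta * t) * (y t) ^ 2) = g := by
      funext t
      simp only [hgdef, hwdef]
      rw [show 2*theta*t = (2*α*t) + (t/(2*eps) + t/(2*eps)) by rw [hαdef]; field_simp; ring,
        Real.exp_add, Real.exp_add]
      ring
    rwa [hfe] at hint
  suffices hws : ∀ t ≤ (0:ℝ), w t = 0 by
    intro t ht
    have h := hws t ht
    simp only [hwdef] at h
    rcases mul_eq_zero.mp h with h | h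
    · exact absurd h (Real.exp_ne_zero _)
    · exact h
  rcases lt_trichotomy c 0 with hc | hc | hc
  · -- oscillatory case
    set ω : ℝ := Real.sqrt (-c) with hωdef
    have hω : 0 < ω := Real.sqrt_pos.mpr (by linarith)
    have hω2 : ω^2 = -c := Real.sq_sqrt (by linarith)
    set af : ℝ → ℝ := fun t => w t * Real.cos (ω*t) - (w1 t/ω) * Real.sin (ω*t) with hafdef
    set bf : ℝ → ℝ := fun t => w t * Real.sin (ω*t) + (w1 t/ω) * Real.cos (ω*t) with hbfdef
    have hlin : ∀ t : ℝ, HasDerivAt (fun t : ℝ => ω*t) ω t := by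
      intro t; simpa using (hasDerivAt_id t).const_mul ω
    have hconsta : ∀ t ≤ (0:ℝ), af t = af 0 := by
      apply aux_const
      intro t ht
      have h := ((hwd t).mul (hlin t).cos).sub (((hw1d t ht).div_const ω).mul (hlin t).sin)
      convert h using 1
      rfl
      rfl
      rfl
      have hcne : c = -(ω^2) := by linarith
      rw [hcne]
      field_simp
      ring
    have hconstb : ∀ t ≤ (0:ℝ), bf t = bf 0 := by
      apply aux_const
      intro t ht
      have h := ((hwd t).mul (hlin t).sin).add (((hw1d t ht).div_const ω).mul (hlin t).cos)
      convert h using 1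
      rfl
      rfl
      rfl
      have hcne : c = -(ω^2) := by linarith
      rw [hcne]
      field_simp
      ring
    have hwform : ∀ t ≤ (0:ℝ), w t = af 0 * Real.cos (ω*t) + bf 0 * Real.sin (ω*t) := by
      intro t ht
      rw [← hconsta t ht, ← hconstb t ht]
      simp only [hafdef, hbfdef]
      have hp := Real.sin_sq_add_cos_sq (ω*t)
      linear_combination (-(w t)) * hp
    by_cases hz : af 0 = 0 ∧ bf 0 = 0
    · intro t ht
      rw [hwform t ht, hz.1, hz.2]; ring
    · exfalso
      have hab : 0 < (af 0)^2 + (bf 0)^2 := by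
        rcases not_and_or.mp hz with h | h
        · nlinarith [mul_self_pos.mpr h, sq_nonneg (bf 0)]
        · nlinarith [mul_self_pos.mpr h, sq_nonneg (af 0)]
      apply aux_osc g hgint hgc (af 0) (bf 0) ω (2*α) hω (by linarith) hab
      intro s hs
      simp only [hgdef]
      rw [hwform s hs]
  · -- double root case
    have hvconst : ∀ t ≤ (0:ℝ), w1 t = w1 0 := by
      apply aux_const
      intro t ht
      have h := hw1d t ht
      rwa [hc, zero_mul] at h
    have hwform : ∀ t ≤ (0:ℝ), w t = w 0 + w1 0 * t := by
      have h2 : ∀ t ≤ (0:ℝ), w t - w1 0 * t = w 0 - w1 0 * 0 := by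
        apply aux_const
        intro t ht
        have h := (hwd t).sub ((hasDerivAt_id t).const_mul (w1 0))
        convert h using 1
        rfl
        rfl
        rfl
        rw [hvconst t ht]; ring
      intro t ht
      have := h2 t ht
      linarith [this]
    by_cases hz : w 0 = 0 ∧ w1 0 = 0
    · intro t ht
      rw [hwform t ht, hz.1, hz.2]; ring
    · exfalso
      by_cases hv0 : w1 0 = 0
      · have hw0 : w 0 ≠ 0 := fun h => hz ⟨h, hv0⟩
        apply aux_lower g hg0 hgint hgc ((w 0)^2) (2*α) 0
          (by positivity) (by linarith) le_rfl
        intro s hs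
        simp only [hgdef]
        rw [hwform s hs, hv0]
        rw [show w 0 + 0 * s = w 0 by ring]
        rw [show (2*α)*s = 2*α*s by ring]
        ring_nf
        exact le_refl _
      · set B : ℝ := -(|w 0| + 1)/|w1 0| with hBdef
        have hv0' : 0 < |w1 0| := abs_pos.mpr hv0
        have hBneg : B ≤ 0 := by
          rw [hBdef]
          apply div_nonpos_of_nonpos_of_nonneg
          · linarith [abs_nonneg (w 0)]
          · exact hv0'.le
        apply aux_lower g hg0 hgint hgc 1 (2*α) B one_pos (by linarith) hBneg
        intro s hs
        have hs0 : s ≤ 0 := le_trans hs hBneg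
        have h1 : |w1 0| * (-s) ≥ |w 0| + 1 := by
          have h2 : (|w 0| + 1)/|w1 0| ≤ -s := by
            have hnb : -B = (|w 0| + 1)/|w1 0| := by rw [hBdef]; ring
            rw [hBdef] at hs
            linarith [hnb.symm.le]
          have := (div_le_iff₀ hv0').mp h2
          nlinarith
        have h3 : |w s| ≥ 1 := by
          rw [hwform s hs0]
          have h4 : |w1 0 * s| = |w1 0| * (-s) := by
            rw [abs_mul, abs_of_nonpos (by linarith : s ≤ 0)]
          have h5 : |w 0 + w1 0 * s| ≥ |w1 0 * s| - |w 0| := by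
            have h := abs_sub (w 0 + w1 0 * s) (w 0)
            rw [add_sub_cancel_left] at h
            linarith
          rw [h4] at h5
          linarith
        have h6 : 1 ≤ (w s)^2 := by
          nlinarith [sq_abs (w s)]
        simp only [hgdef]
        nlinarith [Real.exp_pos (2*α*s), h6]
  · -- real roots case
    set κ : ℝ := Real.sqrt c with hκdef
    have hκ : 0 < κ := Real.sqrt_pos.mpr hc
    have hκ2 : κ^2 = c := Real.sq_sqrt hc.le
    have hexpd : ∀ t : ℝ, HasDerivAt (fun t : ℝ => Real.exp (κ*t)) (Real.exp (κ*t) * κ) t := by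
      intro t
      have := ((hasDerivAt_id t).const_mul κ).exp
      simpa using this
    have hexpd2 : ∀ t : ℝ, HasDerivAt (fun t : ℝ => Real.exp (-κ*t)) (Real.exp (-κ*t) * (-κ)) t := by
      intro t
      have := ((hasDerivAt_id t).const_mul (-κ)).exp
      simpa using this
    set Af : ℝ → ℝ := fun t => (w t - w1 t/κ) * Real.exp (κ*t) with hAfdef
    set Bf : ℝ → ℝ := fun t => (w t + w1 t/κ) * Real.exp (-κ*t) with hBfdef
    have hconstA : ∀ t ≤ (0:ℝ), Af t = Af 0 := by
      apply aux_const
      intro t ht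
      have h := ((hwd t).sub ((hw1d t ht).div_const κ)).mul (hexpd t)
      convert h using 1
      rfl
      rfl
      rfl
      rw [show c = κ^2 from hκ2.symm]
      simp only [Pi.sub_apply]
      field_simp
      ring
    have hconstB : ∀ t ≤ (0:ℝ), Bf t = Bf 0 := by
      apply aux_const
      intro t ht
      have h := ((hwd t).add ((hw1d t ht).div_const κ)).mul (hexpd2 t)
      convert h using 1
      rfl
      rfl
      rfl
      rw [show c = κ^2 from hκ2.symm]
      simp only [Pi.add_apply]
      field_simp
      ring
    have hwform : ∀ t ≤ (0:ℝ),
        w t = (Af 0 * Real.exp (-κ*t) + Bf 0 * Real.exp (κ*t))/2 := by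
      intro t ht
      rw [← hconstA t ht, ← hconstB t ht]
      simp only [hAfdef, hBfdef]
      have hee : Real.exp (κ*t) * Real.exp (-κ*t) = 1 := by
        rw [← Real.exp_add]; ring_nf; exact Real.exp_zero
      linear_combination (-(w t)) * hee
    -- rates
    have hκα : κ < -α := by
      have hnum : 1 - 4*eps*lam < D := by nlinarith
      have h1 : c < D/(2*eps)^2 := by
        rw [hcdef, show ((2:ℝ)*eps)^2 = 4*eps^2 by ring]
        exact (div_lt_div_iff_of_pos_right (by positivity)).mpr hnum
      have h2 : Real.sqrt c < Real.sqrt (D/(2*eps)^2) :=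
        (Real.sqrt_lt_sqrt_iff hc.le).mpr h1
      have h3 : Real.sqrt (D/(2*eps)^2) = Real.sqrt D/(2*eps) := by
        rw [Real.sqrt_div hD.le, Real.sqrt_sq (by positivity : (0:ℝ) ≤ 2*eps)]
      rw [hαval, neg_neg]
      rw [hκdef]
      rw [h3] at h2
      exact h2
    have hδ1 : 2*(α + κ) < 0 := by linarith
    have hδ2 : 2*(α - κ) < 0 := by linarith
    by_cases hz : Af 0 = 0 ∧ Bf 0 = 0
    · intro t ht
      rw [hwform t ht, hz.1, hz.2]; ring
    · exfalso
      by_cases hA0 : Af 0 = 0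
      · have hB0 : Bf 0 ≠ 0 := fun h => hz ⟨hA0, h⟩
        apply aux_lower g hg0 hgint hgc ((Bf 0)^2/4) (2*(α+κ)) 0
          (by positivity) hδ1 le_rfl
        intro s hs
        simp only [hgdef]
        rw [hwform s hs, hA0]
        have he2 : Real.exp (2*(α+κ)*s) = Real.exp (2*α*s) * (Real.exp (κ*s) * Real.exp (κ*s)) := by
          rw [← Real.exp_add, ← Real.exp_add]; ring_nf
        rw [he2]
        ring_nf
        exact le_refl _
      · -- Af 0 ≠ 0 : dominant backward mode
        set q : ℝ := |Af 0|/(2*|Bf 0|+1) with hqdef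
        have habs : 0 < |Af 0| := abs_pos.mpr hA0
        have hq : 0 < q := by rw [hqdef]; positivity
        set T : ℝ := min 0 (Real.log q/(2*κ)) with hTdef
        have hT0 : T ≤ 0 := min_le_left _ _
        apply aux_lower g hg0 hgint hgc ((Af 0)^2/16) (2*(α-κ)) T
          (by positivity) hδ2 hT0
        intro s hs
        have hs0 : s ≤ 0 := le_trans hs hT0
        have hE : (0:ℝ) < Real.exp (κ*s) := Real.exp_pos _
        have hF : (0:ℝ) < Real.exp (-κ*s) := Real.exp_pos _
        have hEF : Real.exp (κ*s) * Real.exp (-κ*s) = 1 := by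
          rw [← Real.exp_add]; ring_nf; exact Real.exp_zero
        have hEq : Real.exp (κ*s) * Real.exp (κ*s) ≤ q := by
          have h1 : 2*(κ*s) ≤ Real.log q := by
            have h2 : s ≤ Real.log q/(2*κ) := le_trans hs (min_le_right _ _)
            have h3 := (le_div_iff₀ (by positivity : (0:ℝ) < 2*κ)).mp h2
            nlinarith [h3]
          calc Real.exp (κ*s) * Real.exp (κ*s) = Real.exp (2*(κ*s)) := by
                rw [← Real.exp_add]; ring_nf
            _ ≤ Real.exp (Real.log q) := Real.exp_le_exp.mpr h1
            _ = q := Real.exp_log hq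
        -- |Bf 0| * E^2 ≤ |Af 0| / 2
        have hBE : |Bf 0| * (Real.exp (κ*s) * Real.exp (κ*s)) ≤ |Af 0|/2 := by
          have h3 : |Bf 0| * q ≤ |Af 0|/2 := by
            rw [hqdef, ← mul_div_assoc, div_le_div_iff₀ (by positivity) (by norm_num : (0:ℝ) < 2)]
            nlinarith [abs_nonneg (Af 0), mul_nonneg (abs_nonneg (Af 0)) (abs_nonneg (Bf 0))]
          have h4 := mul_le_mul_of_nonneg_left hEq (abs_nonneg (Bf 0))
          linarith [h4, h3]
        have hBE2 : |Bf 0| * Real.exp (κ*s) ≤ |Af 0| * Real.exp (-κ*s)/2 := by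
          have h := mul_le_mul_of_nonneg_right hBE hF.le
          have hrw : |Bf 0| * (Real.exp (κ*s) * Real.exp (κ*s)) * Real.exp (-κ*s)
              = |Bf 0| * Real.exp (κ*s) := by
            rw [mul_assoc, mul_assoc, hEF, mul_one]
          rw [hrw] at h
          linarith [h]
        -- conclude
        simp only [hgdef]
        rw [hwform s hs0]
        have he3 : Real.exp (2*(α-κ)*s) = Real.exp (2*α*s) * (Real.exp (-κ*s) * Real.exp (-κ*s)) := by
          rw [← Real.exp_add, ← Real.exp_add]; ring_nf
        rw [he3]
        have hkey : (Af 0)^2 * (Real.exp (-κ*s) * Real.exp (-κ*s)) / 16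
            ≤ ((Af 0 * Real.exp (-κ*s) + Bf 0 * Real.exp (κ*s))/2)^2 := by
          set X : ℝ := |Af 0| * Real.exp (-κ*s) with hXdef
          set Y : ℝ := |Bf 0| * Real.exp (κ*s) with hYdef
          have hX : 0 ≤ X := by positivity
          have hY : 0 ≤ Y := by positivity
          have hYX : Y ≤ X/2 := by rw [hXdef, hYdef]; linarith [hBE2]
          have habs2 : (Af 0 * Real.exp (-κ*s) + Bf 0 * Real.exp (κ*s))^2 ≥ (X - Y)^2 := by
            have h7 : Af 0 * Real.exp (-κ*s) * (Bf 0 * Real.exp (κ*s)) ≥ -(X*Y) := by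
              rw [hXdef, hYdef]
              have hmm := mul_le_mul_of_nonneg_right (neg_abs_le (Af 0 * Bf 0))
                (by positivity : (0:ℝ) ≤ Real.exp (-κ*s) * Real.exp (κ*s))
              rw [abs_mul] at hmm
              nlinarith [hmm]
            have h8 : (Af 0 * Real.exp (-κ*s))^2 = X^2 := by
              rw [hXdef]; exact aux_sq_abs_mul _ _
            have h9 : (Bf 0 * Real.exp (κ*s))^2 = Y^2 := by
              rw [hYdef]; exact aux_sq_abs_mul _ _
            linarith [h7, h8, h9, sq_nonneg (Af 0 * Real.exp (-κ*s) + Bf 0 * Real.exp (κ*s))]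
          have h10 : (X - Y)^2 ≥ (X/2)^2 := by
            have hm := mul_self_le_mul_self (by linarith : (0:ℝ) ≤ X/2) (by linarith : X/2 ≤ X - Y)
            nlinarith [hm]
          have h11 : X^2 = (Af 0)^2 * (Real.exp (-κ*s) * Real.exp (-κ*s)) := by
            rw [hXdef]; rw [mul_pow, sq_abs]; ring
          linarith [habs2, h10, h11]
        linarith [mul_le_mul_of_nonneg_left hkey (Real.exp_pos (2*α*s)).le]
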